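/- Let 0 < a < b, 1 < σ ≤ 2, and let G be the Green's function G(x,τ) = (1/Γ(σ))·[((ln(x/a)/ln(b/a))^{σ−1}·(ln(b/τ))^{σ−1} − (ln(x/τ))^{σ−1})/τ] for a ≤ τ ≤ x ≤ b, and G(x,τ) = (1/Γ(σ))·(ln(x/a)/ln(b/a))^{σ−1}·(ln(b/τ))^{σ−1}/τ for a ≤ x ≤ τ ≤ b. Then max over x ∈ [a,b] of ∫_a^b |G(x,τ)| dτ equals (σ−1)^{σ−1}·(ln(b/a))^{σ}/(σ^{σ+1}·Γ(σ)). -/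

import Mathlib

open Real Set

lemma stmt5_contOn (c σ lo hi : ℝ) (hlo : 0 < lo) (hσ : 0 ≤ σ - 1) :
    ContinuousOn (fun τ => (Real.log c - Real.log τ) ^ (σ - 1) / τ) (Set.Icc lo hi) := by
  apply ContinuousOn.div
  · apply ContinuousOn.rpow_const
    · exact continuousOn_const.sub (Real.continuousOn_log.mono
        (fun τ hτ => ne_of_gt (lt_of_lt_of_le hlo hτ.1)))
    · intro τ _; right; exact hσ
  · exact continuousOn_id
  · intro τ hτ; exact ne_of_gt (lt_of_lt_of_le hlo hτ.1)

lemma stmt5_int_aux (a x c σ : ℝ) (ha : 0 < a) (hax : a ≤ x) (hσ : 1 ≤ σ) :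
    ∫ τ in a..x, (Real.log c - Real.log τ) ^ (σ - 1) / τ =
      ((Real.log c - Real.log a) ^ σ - (Real.log c - Real.log x) ^ σ) / σ := by
  have hσ0 : σ ≠ 0 := by linarith
  have hcont : ContinuousOn (fun τ => (Real.log c - Real.log τ) ^ (σ - 1) / τ) (Set.uIcc a x) := by
    rw [Set.uIcc_of_le hax]; exact stmt5_contOn c σ a x ha (by linarith)
  have key : ∀ τ ∈ Set.uIcc a x, HasDerivAt (fun τ => -(Real.log c - Real.log τ) ^ σ / σ)
      ((Real.log c - Real.log τ) ^ (σ - 1) / τ) τ := by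
    intro τ hτ
    rw [Set.uIcc_of_le hax] at hτ
    have hτ0 : 0 < τ := lt_of_lt_of_le ha hτ.1
    have h1 : HasDerivAt (fun τ => Real.log c - Real.log τ) (-τ⁻¹) τ :=
      (Real.hasDerivAt_log hτ0.ne').const_sub _
    have h2 : HasDerivAt (fun y : ℝ => y ^ σ) (σ * (Real.log c - Real.log τ) ^ (σ - 1))
        (Real.log c - Real.log τ) := Real.hasDerivAt_rpow_const (Or.inr hσ)
    have h4 := ((h2.comp τ h1).div_const σ).neg
    convert h4 using 1
    · rfl
    · rfl
    · funext y; simp only [Function.comp, Pi.neg_apply]; ring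
    rw [div_eq_mul_inv,
      show -(σ * (Real.log c - Real.log τ) ^ (σ - 1) * -τ⁻¹ / σ)
        = (Real.log c - Real.log τ) ^ (σ - 1) * τ⁻¹ * (σ / σ) from by ring,
      div_self hσ0, mul_one]
  rw [intervalIntegral.integral_eq_sub_of_hasDerivAt key (hcont.intervalIntegrable)]
  field_simp
  ring

lemma stmt5_gm (w1 w2 s : ℝ) (h1 : 0 < w1) (h2 : 0 < w2) (hw : w1 + w2 = 1)
    (hs0 : 0 ≤ s) (hs1 : s ≤ 1) : s ^ w1 * (1 - s) ^ w2 ≤ w1 ^ w1 * w2 ^ w2 := by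
  have hA : (0:ℝ) < w1 ^ w1 * w2 ^ w2 := by positivity
  have hgm := Real.geom_mean_le_arith_mean2_weighted (w₁ := w1) (w₂ := w2)
    (p₁ := s / w1) (p₂ := (1 - s) / w2) h1.le h2.le (div_nonneg hs0 h1.le)
    (div_nonneg (by linarith) h2.le) hw
  have e1 : w1 * (s / w1) + w2 * ((1 - s) / w2) = 1 := by
    field_simp
    ring
  rw [e1, Real.div_rpow hs0 h1.le, Real.div_rpow (by linarith : (0:ℝ) ≤ 1 - s) h2.le,
    div_mul_div_comm, div_le_one hA] at hgm
  exact hgm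

lemma stmt5_key_ineq (σ s : ℝ) (hσ : 1 < σ) (hs0 : 0 ≤ s) (hs1 : s ≤ 1) :
    s ^ (σ - 1) * (1 - s) ≤ (σ - 1) ^ (σ - 1) / σ ^ σ := by
  have hσ0 : 0 < σ := by linarith
  have hw1p : (0:ℝ) < (σ - 1) / σ := div_pos (by linarith) hσ0
  have hw2p : (0:ℝ) < 1 / σ := by positivity
  have hww : (σ - 1) / σ + 1 / σ = 1 := by field_simp; ring
  have h2 := stmt5_gm _ _ s hw1p hw2p hww hs0 hs1
  have h3 : (s ^ ((σ - 1) / σ) * (1 - s) ^ (1 / σ)) ^ σ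
      ≤ (((σ - 1) / σ) ^ ((σ - 1) / σ) * (1 / σ) ^ (1 / σ)) ^ σ :=
    Real.rpow_le_rpow (mul_nonneg (Real.rpow_nonneg hs0 _)
      (Real.rpow_nonneg (by linarith) _)) h2 hσ0.le
  have hexp1 : (σ - 1) / σ * σ = σ - 1 := by field_simp
  have hexp2 : 1 / σ * σ = 1 := by field_simp
  have lhs_eq : (s ^ ((σ - 1) / σ) * (1 - s) ^ (1 / σ)) ^ σ = s ^ (σ - 1) * (1 - s) := by
    rw [Real.mul_rpow (Real.rpow_nonneg hs0 _) (Real.rpow_nonneg (by linarith) _),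
      ← Real.rpow_mul hs0, ← Real.rpow_mul (by linarith : (0:ℝ) ≤ 1 - s), hexp1, hexp2,
      Real.rpow_one]
  have hσσ : (0:ℝ) < σ ^ σ := Real.rpow_pos_of_pos hσ0 _
  have rhs_eq : (((σ - 1) / σ) ^ ((σ - 1) / σ) * (1 / σ) ^ (1 / σ)) ^ σ
      = (σ - 1) ^ (σ - 1) / σ ^ σ := by
    rw [Real.mul_rpow (Real.rpow_nonneg hw1p.le _) (Real.rpow_nonneg hw2p.le _),
      ← Real.rpow_mul hw1p.le, ← Real.rpow_mul hw2p.le, hexp1, hexp2, Real.rpow_one,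
      Real.div_rpow (by linarith : (0:ℝ) ≤ σ - 1) hσ0.le,
      Real.rpow_sub_one hσ0.ne']
    field_simp
  rw [lhs_eq, rhs_eq] at h3
  exact h3

lemma stmt5_eq_at_max (σ : ℝ) (hσ : 1 < σ) :
    ((σ - 1) / σ) ^ (σ - 1) * (1 - (σ - 1) / σ) = (σ - 1) ^ (σ - 1) / σ ^ σ := by
  have hσ0 : (0:ℝ) < σ := by linarith
  have h1 : 1 - (σ - 1) / σ = 1 / σ := by field_simp; ring
  have hσσ : (0:ℝ) < σ ^ σ := Real.rpow_pos_of_pos hσ0 _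
  rw [h1, Real.div_rpow (by linarith : (0:ℝ) ≤ σ - 1) hσ0.le, Real.rpow_sub_one hσ0.ne']
  field_simp

theorem stmt_5 (a b σ : ℝ) (ha : 0 < a) (hab : a < b) (hσ1 : 1 < σ) (hσ2 : σ ≤ 2)
    (G : ℝ → ℝ → ℝ)
    (hG : ∀ x τ, G x τ =
      if τ ≤ x then
        (1 / Real.Gamma σ) *
          (((Real.log (x / a) / Real.log (b / a)) ^ (σ - 1) * (Real.log (b / τ)) ^ (σ - 1)
            - (Real.log (x / τ)) ^ (σ - 1)) / τ)
      else
        (1 / Real.Gamma σ) *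
          ((Real.log (x / a) / Real.log (b / a)) ^ (σ - 1) * (Real.log (b / τ)) ^ (σ - 1) / τ)) :
    IsGreatest ((fun x => ∫ τ in a..b, |G x τ|) '' Icc a b)
      ((σ - 1) ^ (σ - 1) * (Real.log (b / a)) ^ σ / (σ ^ (σ + 1) * Real.Gamma σ)) := by
  have hb : 0 < b := ha.trans hab
  have hσ0 : 0 < σ := by linarith
  have hσne : σ ≠ 0 := hσ0.ne'
  have hσ1ne : σ - 1 ≠ 0 := by intro h; linarith [sub_eq_zero.mp h]
  have hσs : (0:ℝ) ≤ σ - 1 := by linarith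
  have hΓ : 0 < Real.Gamma σ := Real.Gamma_pos_of_pos hσ0
  have hL0 : 0 < Real.log (b / a) := Real.log_pos ((one_lt_div ha).2 hab)
  set L := Real.log (b / a) with hLdef
  have hLab : L = Real.log b - Real.log a := by rw [hLdef, Real.log_div hb.ne' ha.ne']
  have hM : (σ - 1) ^ (σ - 1) * L ^ σ / (σ ^ (σ + 1) * Real.Gamma σ)
      = L ^ σ / (σ * Real.Gamma σ) * ((σ - 1) ^ (σ - 1) / σ ^ σ) := by
    have hσσ : (0:ℝ) < σ ^ σ := Real.rpow_pos_of_pos hσ0 _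
    rw [Real.rpow_add_one hσne]
    field_simp
  have hval : ∀ x ∈ Icc a b, (∫ τ in a..b, |G x τ|) =
      L ^ σ / (σ * Real.Gamma σ) *
        (((Real.log x - Real.log a) / L) ^ (σ - 1) * (1 - (Real.log x - Real.log a) / L)) := by
    rintro x ⟨hax, hxb⟩
    have hx0 : 0 < x := lt_of_lt_of_le ha hax
    have hp0 : 0 ≤ Real.log x - Real.log a := sub_nonneg.2 (Real.log_le_log ha hax)
    have hpL : Real.log x - Real.log a ≤ L := by
      rw [hLab]; have := Real.log_le_log hx0 hxb; linarith
    -- nonnegativity of G x on [a, b]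
    have hGnn : ∀ τ ∈ Icc a b, 0 ≤ G x τ := by
      rintro τ ⟨haτ, hτb⟩
      have hτ0 : 0 < τ := lt_of_lt_of_le ha haτ
      have hlb : 0 ≤ Real.log (b / τ) := Real.log_nonneg ((one_le_div hτ0).2 hτb)
      have hlxa : 0 ≤ Real.log (x / a) := Real.log_nonneg ((one_le_div ha).2 hax)
      rw [hG]
      split_ifs with h
      · refine mul_nonneg (div_nonneg zero_le_one hΓ.le)
          (div_nonneg (sub_nonneg.2 ?_) hτ0.le)
        rw [← Real.mul_rpow (div_nonneg hlxa hL0.le) hlb]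
        refine Real.rpow_le_rpow (Real.log_nonneg ((one_le_div hτ0).2 h)) ?_ hσs
        rw [Real.log_div hx0.ne' hτ0.ne', Real.log_div hx0.ne' ha.ne',
          Real.log_div hb.ne' hτ0.ne']
        have hta : 0 ≤ Real.log τ - Real.log a := sub_nonneg.2 (Real.log_le_log ha haτ)
        have hbx : 0 ≤ Real.log b - Real.log x := sub_nonneg.2 (Real.log_le_log hx0 hxb)
        rw [div_mul_eq_mul_div, le_div_iff₀ hL0, hLab]
        nlinarith [mul_nonneg hbx hta]
      · exact mul_nonneg (div_nonneg zero_le_one hΓ.le)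
          (div_nonneg (mul_nonneg (Real.rpow_nonneg (div_nonneg hlxa hL0.le) _)
            (Real.rpow_nonneg hlb _)) hτ0.le)
    have habs : (∫ τ in a..b, |G x τ|) = ∫ τ in a..b, G x τ := by
      apply intervalIntegral.integral_congr
      intro τ hτ
      rw [Set.uIcc_of_le hab.le] at hτ
      exact abs_of_nonneg (hGnn τ hτ)
    -- explicit descriptions on the two pieces
    have eq1 : EqOn (G x) (fun τ =>
        (1 / Real.Gamma σ * ((Real.log x - Real.log a) / L) ^ (σ - 1)) *
          ((Real.log b - Real.log τ) ^ (σ - 1) / τ)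
        - 1 / Real.Gamma σ * ((Real.log x - Real.log τ) ^ (σ - 1) / τ)) (Set.uIcc a x) := by
      intro τ hτ
      rw [Set.uIcc_of_le hax] at hτ
      have hτ0 : 0 < τ := lt_of_lt_of_le ha hτ.1
      rw [hG, if_pos hτ.2, Real.log_div hx0.ne' ha.ne', Real.log_div hb.ne' hτ0.ne',
        Real.log_div hx0.ne' hτ0.ne']
      ring
    have eq2 : EqOn (G x) (fun τ =>
        (1 / Real.Gamma σ * ((Real.log x - Real.log a) / L) ^ (σ - 1)) *
          ((Real.log b - Real.log τ) ^ (σ - 1) / τ)) (Set.uIcc x b) := by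
      intro τ hτ
      rw [Set.uIcc_of_le hxb] at hτ
      have hτ0 : 0 < τ := lt_of_lt_of_le hx0 hτ.1
      rw [hG]
      split_ifs with h
      · have hτx : τ = x := le_antisymm h hτ.1
        subst hτx
        rw [div_self hτ0.ne', Real.log_one, Real.zero_rpow hσ1ne, sub_zero,
          Real.log_div hτ0.ne' ha.ne', Real.log_div hb.ne' hτ0.ne']
        ring
      · rw [Real.log_div hx0.ne' ha.ne', Real.log_div hb.ne' hτ0.ne']
        ring
    -- integrability
    have hIb_ax : IntervalIntegrable (fun τ => (Real.log b - Real.log τ) ^ (σ - 1) / τ)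
        MeasureTheory.volume a x := by
      apply ContinuousOn.intervalIntegrable
      rw [Set.uIcc_of_le hax]
      exact stmt5_contOn b σ a x ha hσs
    have hIx_ax : IntervalIntegrable (fun τ => (Real.log x - Real.log τ) ^ (σ - 1) / τ)
        MeasureTheory.volume a x := by
      apply ContinuousOn.intervalIntegrable
      rw [Set.uIcc_of_le hax]
      exact stmt5_contOn x σ a x ha hσs
    have hIb_xb : IntervalIntegrable (fun τ => (Real.log b - Real.log τ) ^ (σ - 1) / τ)
        MeasureTheory.volume x b := by
      apply ContinuousOn.intervalIntegrable
      rw [Set.uIcc_of_le hxb]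
      exact stmt5_contOn b σ x b hx0 hσs
    have hint1 : IntervalIntegrable (fun τ =>
        (1 / Real.Gamma σ * ((Real.log x - Real.log a) / L) ^ (σ - 1)) *
          ((Real.log b - Real.log τ) ^ (σ - 1) / τ)
        - 1 / Real.Gamma σ * ((Real.log x - Real.log τ) ^ (σ - 1) / τ))
        MeasureTheory.volume a x :=
      (hIb_ax.const_mul _).sub (hIx_ax.const_mul _)
    have hint2 : IntervalIntegrable (fun τ =>
        (1 / Real.Gamma σ * ((Real.log x - Real.log a) / L) ^ (σ - 1)) *
          ((Real.log b - Real.log τ) ^ (σ - 1) / τ)) MeasureTheory.volume x b :=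
      hIb_xb.const_mul _
    have hGint1 : IntervalIntegrable (G x) MeasureTheory.volume a x := by
      apply hint1.congr
      intro τ hτ
      exact (eq1 (Set.uIoc_subset_uIcc hτ)).symm
    have hGint2 : IntervalIntegrable (G x) MeasureTheory.volume x b := by
      apply hint2.congr
      intro τ hτ
      exact (eq2 (Set.uIoc_subset_uIcc hτ)).symm
    have hsplit : (∫ τ in a..b, G x τ) = (∫ τ in a..x, G x τ) + ∫ τ in x..b, G x τ :=
      (intervalIntegral.integral_add_adjacent_intervals hGint1 hGint2).symm
    rw [habs, hsplit, intervalIntegral.integral_congr eq1, intervalIntegral.integral_congr eq2,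
      intervalIntegral.integral_sub (hIb_ax.const_mul _) (hIx_ax.const_mul _),
      intervalIntegral.integral_const_mul, intervalIntegral.integral_const_mul,
      intervalIntegral.integral_const_mul,
      stmt5_int_aux a x b σ ha hax hσ1.le, stmt5_int_aux a x x σ ha hax hσ1.le,
      stmt5_int_aux x b b σ hx0 hxb hσ1.le, sub_self, sub_self,
      Real.zero_rpow hσne, ← hLab]
    have hpow : ((Real.log x - Real.log a) / L) ^ (σ - 1) * ((Real.log x - Real.log a) / L)
        = ((Real.log x - Real.log a) / L) ^ σ := by
      rcases eq_or_lt_of_le (div_nonneg hp0 hL0.le) with h | h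
      · rw [← h, Real.zero_rpow hσne, Real.zero_rpow hσ1ne, zero_mul]
      · rw [← Real.rpow_add_one (ne_of_gt h), sub_add_cancel]
    have hps : (Real.log x - Real.log a) ^ σ
        = ((Real.log x - Real.log a) / L) ^ (σ - 1) * ((Real.log x - Real.log a) / L) * L ^ σ := by
      rw [hpow, ← Real.mul_rpow (div_nonneg hp0 hL0.le) hL0.le, div_mul_cancel₀ _ hL0.ne']
    rw [hps]
    field_simp
    ring
  constructor
  · -- membership
    refine ⟨a * Real.exp ((σ - 1) / σ * L), ⟨?_, ?_⟩, ?_⟩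
    · exact le_mul_of_one_le_right ha.le (Real.one_le_exp (by positivity))
    · have h1 : (σ - 1) / σ * L ≤ L := by
        have h2 : (σ - 1) / σ ≤ 1 := by
          rw [div_le_one hσ0]; linarith
        nlinarith
      calc a * Real.exp ((σ - 1) / σ * L) ≤ a * Real.exp L :=
            mul_le_mul_of_nonneg_left (Real.exp_le_exp.2 h1) ha.le
        _ = a * (b / a) := by rw [hLdef, Real.exp_log (by positivity)]
        _ = b := by field_simp
    · have hmem : a * Real.exp ((σ - 1) / σ * L) ∈ Icc a b := by
        constructor
        · exact le_mul_of_one_le_right ha.le (Real.one_le_exp (by positivity))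
        · have h1 : (σ - 1) / σ * L ≤ L := by
            have h2 : (σ - 1) / σ ≤ 1 := by
              rw [div_le_one hσ0]; linarith
            nlinarith
          calc a * Real.exp ((σ - 1) / σ * L) ≤ a * Real.exp L :=
                mul_le_mul_of_nonneg_left (Real.exp_le_exp.2 h1) ha.le
            _ = a * (b / a) := by rw [hLdef, Real.exp_log (by positivity)]
            _ = b := by field_simp
      show (∫ τ in a..b, |G (a * Real.exp ((σ - 1) / σ * L)) τ|)
        = (σ - 1) ^ (σ - 1) * L ^ σ / (σ ^ (σ + 1) * Real.Gamma σ)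
      rw [hval _ hmem]
      have hlg : Real.log (a * Real.exp ((σ - 1) / σ * L)) - Real.log a = (σ - 1) / σ * L := by
        rw [Real.log_mul ha.ne' (Real.exp_ne_zero _), Real.log_exp]; ring
      rw [hlg]
      have ht : (σ - 1) / σ * L / L = (σ - 1) / σ := by rw [mul_div_assoc, div_self hL0.ne', mul_one]
      rw [ht, stmt5_eq_at_max σ hσ1, hM]
  · rintro y ⟨x, hx, rfl⟩
    show (∫ τ in a..b, |G x τ|) ≤ (σ - 1) ^ (σ - 1) * L ^ σ / (σ ^ (σ + 1) * Real.Gamma σ)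
    rw [hval x hx, hM]
    have hp0 : 0 ≤ Real.log x - Real.log a :=
      sub_nonneg.2 (Real.log_le_log ha hx.1)
    have hpL : Real.log x - Real.log a ≤ L := by
      rw [hLab]
      have := Real.log_le_log (lt_of_lt_of_le ha hx.1) hx.2
      linarith
    exact mul_le_mul_of_nonneg_left
      (stmt5_key_ineq σ _ hσ1 (div_nonneg hp0 hL0.le) ((div_le_one hL0).2 hpL))
      (div_nonneg (Real.rpow_nonneg hL0.le _) (mul_nonneg hσ0.le hΓ.le))
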